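/- Let O ∼ Haar(SO(n)) and Q ∼ Haar(O(n)), and let A ∈ ℝ^{n×k} with k < n. Then OA and QA are equal in distribution. -/

import Mathlib

open MeasureTheory Matrix

/-- Borel/pi measurable structure on real matrices (via `Matrix m n ℝ := m → n → ℝ`). -/
instance matrixMeasurableSpace {m n : Type*} : MeasurableSpace (Matrix m n ℝ) :=
  MeasurableSpace.pi

namespace Stmt13Aux

open ENNReal

lemma measurable_mul_matrix {α : Type*} [MeasurableSpace α] {m p q : Type*} [Fintype p]
    {f : α → Matrix m p ℝ} {g : α → Matrix p q ℝ} (hf : Measurable f) (hg : Measurable g) :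
    Measurable fun x => f x * g x := by
  refine measurable_pi_lambda _ fun i => measurable_pi_lambda _ fun j => ?_
  simp only [Matrix.mul_apply]
  exact Finset.measurable_sum _ fun l _ =>
    ((measurable_pi_apply l).comp ((measurable_pi_apply i).comp hf)).mul
      ((measurable_pi_apply j).comp ((measurable_pi_apply l).comp hg))

lemma measurable_transpose {m p : Type*} : Measurable fun Q : Matrix m p ℝ => Qᵀ := by
  refine measurable_pi_lambda _ fun i => measurable_pi_lambda _ fun j => ?_
  exact (measurable_pi_apply i).comp (measurable_pi_apply j)

lemma orth_det {d : ℕ} {y : Matrix (Fin d) (Fin d) ℝ} (hy : yᵀ * y = 1) :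
    y.det = 1 ∨ y.det = -1 := by
  have h : y.det * y.det = 1 := by
    have := congrArg Matrix.det hy
    rwa [Matrix.det_mul, Matrix.det_transpose, Matrix.det_one] at this
  exact mul_self_eq_one_iff.mp h

lemma lintegral_translate {d : ℕ} {μ : Measure (Matrix (Fin d) (Fin d) ℝ)}
    {R : Matrix (Fin d) (Fin d) ℝ} (hR : μ.map (fun Q => R * Q) = μ)
    {g : Matrix (Fin d) (Fin d) ℝ → ℝ≥0∞} (hg : Measurable g) :
    ∫⁻ Q, g (R * Q) ∂μ = ∫⁻ Q, g Q ∂μ := by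
  have hm : Measurable fun Q : Matrix (Fin d) (Fin d) ℝ => R * Q :=
    measurable_mul_matrix measurable_const measurable_id
  conv_rhs => rw [← hR]
  rw [lintegral_map hg hm]

lemma exists_reflection {n k : ℕ} (hk : k < n) (A : Matrix (Fin n) (Fin k) ℝ) :
    ∃ W : Matrix (Fin n) (Fin n) ℝ, Wᵀ * W = 1 ∧ W.det = -1 ∧ W * A = A := by
  obtain ⟨v, hv, hAv⟩ : ∃ v : Fin n → ℝ, v ≠ 0 ∧ Aᵀ *ᵥ v = 0 := by
    by_contra hcon
    push_neg at hcon
    have hinj : Function.Injective (Matrix.mulVecLin Aᵀ) := by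
      rw [← LinearMap.ker_eq_bot, Submodule.eq_bot_iff]
      intro v hvmem
      by_contra hvne
      exact hcon v hvne (by
        rw [Matrix.mulVec_transpose]
        simpa [Matrix.mulVecLin_apply] using hvmem)
    have hle := LinearMap.finrank_le_finrank_of_injective hinj
    rw [Module.finrank_fin_fun, Module.finrank_fin_fun] at hle
    omega
  set c : ℝ := v ⬝ᵥ v with hc
  have hc0 : c ≠ 0 := fun h => hv (dotProduct_self_eq_zero.mp h)
  set a : ℝ := 2 / c with ha
  set P : Matrix (Fin n) (Fin n) ℝ := vecMulVec v v with hP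
  have hPsymm : Pᵀ = P := by
    ext i j
    simp [hP, Matrix.vecMulVec_apply, Matrix.transpose_apply, mul_comm]
  have hPP : P * P = c • P := by
    ext i j
    simp only [hP, Matrix.mul_apply, Matrix.vecMulVec_apply, Matrix.smul_apply,
      smul_eq_mul, hc, dotProduct]
    rw [Finset.sum_mul]
    exact Finset.sum_congr rfl fun l _ => by ring
  refine ⟨1 - a • P, ?_, ?_, ?_⟩
  · have hWt : (1 - a • P)ᵀ = 1 - a • P := by
      rw [Matrix.transpose_sub, Matrix.transpose_one, Matrix.transpose_smul, hPsymm]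
    rw [hWt]
    have e1 : (a • P) * (a • P) = (a * a * c) • P := by
      rw [smul_mul_assoc, mul_smul_comm, hPP, smul_smul, smul_smul]
    have e2 : a * a * c = a + a := by
      have hac : a * c = 2 := by rw [ha]; exact div_mul_cancel₀ 2 hc0
      calc a * a * c = a * (a * c) := by ring
        _ = a + a := by rw [hac]; ring
    calc (1 - a • P) * (1 - a • P)
        = 1 * (1 - a • P) - (a • P) * (1 - a • P) := by rw [Matrix.sub_mul]
      _ = 1 - a • P - ((a • P) - (a • P) * (a • P)) := by
          rw [Matrix.one_mul, Matrix.mul_sub, Matrix.mul_one]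
      _ = 1 - a • P - a • P + (a + a) • P := by rw [e1, e2]; abel
      _ = 1 := by rw [add_smul]; abel
  · have hcr : Matrix.replicateCol (Fin 1) ((-a) • v) * Matrix.replicateRow (Fin 1) v = -(a • P) := by
      erw [← Matrix.vecMulVec_eq (ι := Fin 1)]
      ext i j
      simp [Matrix.vecMulVec_apply, hP]
      ring
    have hW : (1 : Matrix (Fin n) (Fin n) ℝ) - a • P
        = 1 + Matrix.replicateCol (Fin 1) ((-a) • v) * Matrix.replicateRow (Fin 1) v := by
      rw [hcr, sub_eq_add_neg]
    rw [hW]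
    erw [Matrix.det_one_add_replicateCol_mul_replicateRow (ι := Fin 1)]
    simp only [dotProduct_smul, smul_eq_mul, ← hc]
    rw [ha, neg_mul, div_mul_cancel₀ 2 hc0]
    norm_num
  · have hPA : P * A = 0 := by
      ext i j
      simp only [hP, Matrix.mul_apply, Matrix.vecMulVec_apply, Matrix.zero_apply]
      have hj : ∑ l, A l j * v l = 0 := by
        have := congrFun hAv j
        simpa [Matrix.mulVec, dotProduct, Matrix.transpose_apply] using this
      calc ∑ l, v i * v l * A l j = v i * ∑ l, A l j * v l := by
            rw [Finset.mul_sum]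
            exact Finset.sum_congr rfl fun l _ => by ring
        _ = 0 := by rw [hj, mul_zero]
    rw [Matrix.sub_mul, Matrix.one_mul, Matrix.smul_mul, hPA, smul_zero, sub_zero]

lemma right_invariant {d : ℕ} (μ : Measure (Matrix (Fin d) (Fin d) ℝ)) [IsProbabilityMeasure μ]
    (hsupp : μ {Q : Matrix (Fin d) (Fin d) ℝ | Qᵀ * Q = 1 ∧ Q.det = 1}ᶜ = 0)
    (hinv : ∀ R : Matrix (Fin d) (Fin d) ℝ, Rᵀ * R = 1 → R.det = 1 →
      μ.map (fun Q => R * Q) = μ)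
    {S : Matrix (Fin d) (Fin d) ℝ} (hS : Sᵀ * S = 1) (hdS : S.det = 1)
    {g : Matrix (Fin d) (Fin d) ℝ → ℝ≥0∞} (hg : Measurable g) :
    ∫⁻ x, g (x * S) ∂μ = ∫⁻ x, g x ∂μ := by
  have hae : ∀ᵐ x ∂μ, xᵀ * x = 1 ∧ x.det = 1 := by
    rw [MeasureTheory.ae_iff]
    exact hsupp
  have key : ∀ S : Matrix (Fin d) (Fin d) ℝ, Sᵀ * S = 1 → S.det = 1 →
      ∀ g : Matrix (Fin d) (Fin d) ℝ → ℝ≥0∞, Measurable g →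
      ∫⁻ x, g (x * S) ∂μ = ∫⁻ x, g xᵀ ∂μ := by
    intro S hS hdS g hg
    have hgS : Measurable fun y : Matrix (Fin d) (Fin d) ℝ => g (y * S) :=
      hg.comp (measurable_mul_matrix measurable_id measurable_const)
    have hunc : Measurable (Function.uncurry
        fun x y : Matrix (Fin d) (Fin d) ℝ => g (xᵀ * y * S)) := by
      apply hg.comp
      exact measurable_mul_matrix
        (measurable_mul_matrix (measurable_transpose.comp measurable_fst) measurable_snd)
        measurable_const
    have h1 : ∫⁻ x, ∫⁻ y, g (xᵀ * y * S) ∂μ ∂μ = ∫⁻ x, g (x * S) ∂μ := by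
      have hcongr : ∀ᵐ x ∂μ, ∫⁻ y, g (xᵀ * y * S) ∂μ = ∫⁻ y, g (y * S) ∂μ := by
        filter_upwards [hae] with x hx
        have hxt : (xᵀ)ᵀ * xᵀ = 1 := by
          rw [Matrix.transpose_transpose]
          exact mul_eq_one_comm.mp hx.1
        have hdxt : (xᵀ).det = 1 := by rw [Matrix.det_transpose]; exact hx.2
        simpa using lintegral_translate (hinv xᵀ hxt hdxt) hgS
      rw [lintegral_congr_ae hcongr, lintegral_const, measure_univ, mul_one]
    have h2 : ∫⁻ x, ∫⁻ y, g (xᵀ * y * S) ∂μ ∂μ = ∫⁻ x, g xᵀ ∂μ := by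
      rw [lintegral_lintegral_swap hunc.aemeasurable]
      have hcongr : ∀ᵐ y ∂μ, ∫⁻ x, g (xᵀ * y * S) ∂μ = ∫⁻ x, g xᵀ ∂μ := by
        filter_upwards [hae] with y hy
        have hTo : (y * S)ᵀ * (y * S) = 1 := by
          rw [Matrix.transpose_mul, Matrix.mul_assoc, ← Matrix.mul_assoc yᵀ, hy.1,
            Matrix.one_mul, hS]
        have hdT : (y * S).det = 1 := by rw [Matrix.det_mul, hy.2, hdS, one_mul]
        have hTt : ((y * S)ᵀ)ᵀ * (y * S)ᵀ = 1 := by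
          rw [Matrix.transpose_transpose]
          exact mul_eq_one_comm.mp hTo
        have hdTt : ((y * S)ᵀ).det = 1 := by rw [Matrix.det_transpose]; exact hdT
        have htr := lintegral_translate (hinv (y * S)ᵀ hTt hdTt)
          (hg.comp measurable_transpose)
        calc ∫⁻ x, g (xᵀ * y * S) ∂μ = ∫⁻ x, g (((y * S)ᵀ * x)ᵀ) ∂μ := by
              refine lintegral_congr fun x => ?_
              rw [Matrix.transpose_mul, Matrix.transpose_transpose, ← Matrix.mul_assoc]
          _ = ∫⁻ x, g xᵀ ∂μ := by simpa using htr
      rw [lintegral_congr_ae hcongr, lintegral_const, measure_univ, mul_one]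
    rw [← h1, h2]
  have e1 := key S hS hdS g hg
  have e2 := key 1 (by simp) (by simp) g hg
  simp only [Matrix.mul_one] at e2
  rw [e1, ← e2]

lemma rightA {n k : ℕ} (hk : k < n) (μ : Measure (Matrix (Fin n) (Fin n) ℝ))
    [IsProbabilityMeasure μ]
    (hsupp : μ {Q : Matrix (Fin n) (Fin n) ℝ | Qᵀ * Q = 1 ∧ Q.det = 1}ᶜ = 0)
    (hinv : ∀ R : Matrix (Fin n) (Fin n) ℝ, Rᵀ * R = 1 → R.det = 1 →
      μ.map (fun Q => R * Q) = μ)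
    (A : Matrix (Fin n) (Fin k) ℝ) {y : Matrix (Fin n) (Fin n) ℝ} (hy : yᵀ * y = 1)
    {g : Matrix (Fin n) (Fin k) ℝ → ℝ≥0∞} (hg : Measurable g) :
    ∫⁻ x, g (x * y * A) ∂μ = ∫⁻ x, g (x * A) ∂μ := by
  obtain ⟨W, hW, hdW, hWA⟩ := exists_reflection hk A
  have main : ∀ S : Matrix (Fin n) (Fin n) ℝ, Sᵀ * S = 1 → S.det = 1 →
      ∫⁻ x, g (x * S * A) ∂μ = ∫⁻ x, g (x * A) ∂μ := by
    intro S hS hdS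
    have hgA : Measurable fun z : Matrix (Fin n) (Fin n) ℝ => g (z * A) :=
      hg.comp (measurable_mul_matrix measurable_id measurable_const)
    simpa using right_invariant μ hsupp hinv hS hdS hgA
  rcases orth_det hy with h1 | h1
  · exact main y hy h1
  · have hS : (y * W)ᵀ * (y * W) = 1 := by
      rw [Matrix.transpose_mul, Matrix.mul_assoc, ← Matrix.mul_assoc yᵀ, hy,
        Matrix.one_mul, hW]
    have hdS : (y * W).det = 1 := by rw [Matrix.det_mul, h1, hdW]; norm_num
    have h2 : ∀ x : Matrix (Fin n) (Fin n) ℝ, x * (y * W) * A = x * y * A := by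
      intro x
      rw [← Matrix.mul_assoc x y W, Matrix.mul_assoc (x * y) W A, hWA]
    calc ∫⁻ x, g (x * y * A) ∂μ = ∫⁻ x, g (x * (y * W) * A) ∂μ :=
          lintegral_congr fun x => by rw [h2]
      _ = ∫⁻ x, g (x * A) ∂μ := main (y * W) hS hdS

end Stmt13Aux

open Stmt13Aux in
/-- Let `O ∼ Haar(SO(n))` and `Q ∼ Haar(O(n))` — modelled as probability
measures on `n × n` real matrices that are supported on the respective groups and
left-invariant under the respective group actions — and let `A ∈ ℝ^{n×k}` with `k < n`.
Then `OA` and `QA` are equal in distribution. -/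
theorem stmt13 {n k : ℕ} (hk : k < n)
    (μO μSO : Measure (Matrix (Fin n) (Fin n) ℝ))
    [IsProbabilityMeasure μO] [IsProbabilityMeasure μSO]
    (hOsupp : μO {Q | Qᵀ * Q = 1}ᶜ = 0)
    (hSOsupp : μSO {Q | Qᵀ * Q = 1 ∧ Q.det = 1}ᶜ = 0)
    (hOinv : ∀ R : Matrix (Fin n) (Fin n) ℝ, Rᵀ * R = 1 →
      μO.map (fun Q => R * Q) = μO)
    (hSOinv : ∀ R : Matrix (Fin n) (Fin n) ℝ, Rᵀ * R = 1 → R.det = 1 →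
      μSO.map (fun Q => R * Q) = μSO)
    (A : Matrix (Fin n) (Fin k) ℝ) :
    μSO.map (fun Q => Q * A) = μO.map (fun Q => Q * A) := by
  have hfmeas : Measurable fun Q : Matrix (Fin n) (Fin n) ℝ => Q * A :=
    measurable_mul_matrix measurable_id measurable_const
  have haeO : ∀ᵐ y ∂μO, yᵀ * y = 1 := by
    rw [MeasureTheory.ae_iff]; exact hOsupp
  have haeSO : ∀ᵐ x ∂μSO, xᵀ * x = 1 ∧ x.det = 1 := by
    rw [MeasureTheory.ae_iff]; exact hSOsupp
  have L : ∀ g : Matrix (Fin n) (Fin k) ℝ → ENNReal, Measurable g →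
      ∫⁻ x, g (x * A) ∂μSO = ∫⁻ y, g (y * A) ∂μO := by
    intro g hg
    have hgA : Measurable fun y : Matrix (Fin n) (Fin n) ℝ => g (y * A) :=
      hg.comp (measurable_mul_matrix measurable_id measurable_const)
    have hunc : Measurable (Function.uncurry
        fun x y : Matrix (Fin n) (Fin n) ℝ => g (x * y * A)) := by
      apply hg.comp
      exact measurable_mul_matrix
        (measurable_mul_matrix measurable_fst measurable_snd) measurable_const
    have h1 : ∫⁻ x, ∫⁻ y, g (x * y * A) ∂μO ∂μSO = ∫⁻ y, g (y * A) ∂μO := by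
      have hcongr : ∀ᵐ x ∂μSO, ∫⁻ y, g (x * y * A) ∂μO = ∫⁻ y, g (y * A) ∂μO := by
        filter_upwards [haeSO] with x hx
        simpa using lintegral_translate (hOinv x hx.1) hgA
      rw [lintegral_congr_ae hcongr, lintegral_const, measure_univ, mul_one]
    have h2 : ∫⁻ x, ∫⁻ y, g (x * y * A) ∂μO ∂μSO = ∫⁻ x, g (x * A) ∂μSO := by
      rw [lintegral_lintegral_swap hunc.aemeasurable]
      have hcongr : ∀ᵐ y ∂μO, ∫⁻ x, g (x * y * A) ∂μSO = ∫⁻ x, g (x * A) ∂μSO := by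
        filter_upwards [haeO] with y hy
        exact rightA hk μSO hSOsupp hSOinv A hy hg
      rw [lintegral_congr_ae hcongr, lintegral_const, measure_univ, mul_one]
    rw [← h1, h2]
  ext s hs
  have hrep : ∀ μ : Measure (Matrix (Fin n) (Fin n) ℝ),
      μ ((fun Q : Matrix (Fin n) (Fin n) ℝ => Q * A) ⁻¹' s)
        = ∫⁻ x, s.indicator (1 : Matrix (Fin n) (Fin k) ℝ → ENNReal) (x * A) ∂μ := by
    intro μ
    rw [← lintegral_indicator_one (hfmeas hs)]
    exact lintegral_congr fun x => by
      by_cases hx : x * A ∈ s <;> simp [Set.indicator_apply, Set.mem_preimage, hx]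
  rw [Measure.map_apply hfmeas hs, Measure.map_apply hfmeas hs, hrep μSO, hrep μO]
  exact L (s.indicator 1) (measurable_one.indicator hs)
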